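/- The quotient Boolean algebra P({l,r}*)/I, where I is the ideal of subsets of {l,r}* with no infinite antichain (for the prefix order), is atomless: every nonzero element strictly contains a nonzero element. -/

import Mathlib

/-- An antichain for the prefix order on finite binary words. -/
def IsAnti (A : Set (List Bool)) : Prop :=
  ∀ x ∈ A, ∀ y ∈ A, x ≠ y → ¬ x <+: y ∧ ¬ y <+: x

/-- `B` contains an infinite antichain for the prefix order. -/
def HasInfAnti (B : Set (List Bool)) : Prop :=
  ∃ A : Set (List Bool), A ⊆ B ∧ A.Infinite ∧ IsAnti A

lemma IsAnti.mono {A B : Set (List Bool)} (h : IsAnti B) (hAB : A ⊆ B) : IsAnti A :=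
  fun x hx y hy hxy => h x (hAB hx) y (hAB hy) hxy

/-- `P({l,r}*)/I` is atomless: for every nonzero element `[X]` (i.e. `X ∉ I`) there is
an element `[Z]` with `0 < [Z] < [X]`, i.e. `Z ∉ I`, `Z \ X ∈ I`, and `[Z] ≠ [X]`
(`X \ Z ∉ I`). -/
theorem quotient_by_I_atomless :
    ∀ X : Set (List Bool), HasInfAnti X →
      ∃ Z : Set (List Bool), HasInfAnti Z ∧ ¬ HasInfAnti (Z \ X) ∧ HasInfAnti (X \ Z) := by
  rintro X ⟨A, hAX, hAinf, hAanti⟩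
  have f := hAinf.natEmbedding
  set g : ℕ → List Bool := fun n => (f n : List Bool) with hg
  have hginj : Function.Injective g := fun a b h => f.injective (Subtype.ext h)
  have hgA : ∀ n, g n ∈ A := fun n => (f n).2
  set Z : Set (List Bool) := g '' {n | Even n} with hZ
  have hZA : Z ⊆ A := by rintro _ ⟨n, -, rfl⟩; exact hgA n
  have heven : ({n : ℕ | Even n}).Infinite :=
    Set.infinite_of_injective_forall_mem (f := fun n : ℕ => 2 * n)
      (fun a b h => by dsimp at h; omega) (fun n => ⟨n, two_mul n⟩)
  have hodd : ({n : ℕ | ¬ Even n}).Infinite :=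
    Set.infinite_of_injective_forall_mem (f := fun n : ℕ => 2 * n + 1)
      (fun a b h => by dsimp at h; omega) (fun n => by simp [Nat.even_add_one, Nat.even_iff])
  refine ⟨Z, ⟨Z, subset_rfl, heven.image (hginj.injOn), hAanti.mono hZA⟩, ?_, ?_⟩
  · rintro ⟨B, hB, hBinf, -⟩
    have : Z \ X = ∅ := Set.diff_eq_empty.mpr (hZA.trans hAX)
    rw [this] at hB
    exact hBinf (Set.subset_empty_iff.mp hB ▸ Set.finite_empty)
  · refine ⟨g '' {n | ¬ Even n}, ?_, hodd.image (hginj.injOn),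
      hAanti.mono (by rintro _ ⟨n, -, rfl⟩; exact hgA n)⟩
    rintro _ ⟨n, hn, rfl⟩
    refine ⟨hAX (hgA n), ?_⟩
    rintro ⟨m, hm, hmn⟩
    exact hn (hginj hmn ▸ hm)
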